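/- Let n ≥ 1, R > 0, and define z : (0,R] → ℝ by z(r) = (1/2)(r/R)³ - (3/2)(r/R). Then z satisfies the third-order ODE -r^{1-n}·(r^{n-1}·(r^{1-n}·(r^{n-1}·z)')')' = λ on (0,R) with λ = -n(n+2)/R³, together with the boundary conditions z(R) = -1 and z'(R) + (n-1)·z(R)/R = -(n-1)/R, and |z(r)| ≤ 1 for all r ∈ (0,R]. -/

import Mathlib

/-- Radial calibration of the ball `B_R` for the fourth-order total variation flow:
`z r = (1/2)(r/R)³ - (3/2)(r/R)` satisfies
`-r^{1-n}(r^{n-1}(r^{1-n}(r^{n-1}z)')')' = λ` on `(0,R)` with `λ = -n(n+2)/R³`,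
the boundary conditions `z R = -1`, `z'(R) + (n-1)z(R)/R = -(n-1)/R`, and `|z| ≤ 1`
on `(0,R]`. -/
theorem fourth_order_ball_calibration
    (n : ℕ) (hn : 1 ≤ n) (R : ℝ) (hR : 0 < R)
    (z : ℝ → ℝ) (hz : ∀ r, z r = (1/2) * (r/R)^3 - (3/2) * (r/R)) :
    (∀ r ∈ Set.Ioo (0:ℝ) R,
      -(r ^ ((1:ℝ) - n)) *
        deriv (fun s => s ^ ((n:ℝ) - 1) *
          deriv (fun s' => s' ^ ((1:ℝ) - n) *
            deriv (fun s'' => s'' ^ ((n:ℝ) - 1) * z s'') s') s) r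
        = -((n:ℝ) * ((n:ℝ) + 2)) / R^3) ∧
    z R = -1 ∧
    deriv z R + ((n:ℝ) - 1) * z R / R = -((n:ℝ) - 1) / R ∧
    (∀ r ∈ Set.Ioc (0:ℝ) R, |z r| ≤ 1) := by
  have hRne : R ≠ 0 := hR.ne'
  set a : ℝ := 1/(2*R^3) with ha
  set b : ℝ := -3/(2*R) with hb
  have hz' : ∀ s, z s = a * s^3 + b * s := by
    intro s; rw [hz, ha, hb]; field_simp; ring
  have hmul : ∀ (s : ℝ), 0 < s → ∀ (p q : ℝ), s ^ p * s ^ q = s ^ (p + q) := by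
    intro s hs p q; rw [← Real.rpow_add hs]
  have hnat : ∀ (s : ℝ), 0 < s → ∀ (k : ℕ), (s : ℝ) ^ (k : ℝ) = s ^ k := by
    intro s hs k; exact Real.rpow_natCast s k
  -- eventual positivity
  have hpos : ∀ r : ℝ, 0 < r → ∀ᶠ s in nhds r, (0:ℝ) < s := by
    intro r hr; exact eventually_gt_nhds hr
  set c : ℝ := (n:ℝ) with hc
  -- step 0 : the innermost product
  have hE0 : ∀ s : ℝ, 0 < s → s ^ ((n:ℝ) - 1) * z s = a * s ^ (c+2) + b * s ^ c := by
    intro s hs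
    have e1 : s ^ ((n:ℝ) - 1) * s ^ (3:ℝ) = s ^ (c+2) := by
      rw [hmul s hs, hc]; ring_nf
    have e2 : s ^ ((n:ℝ) - 1) * s ^ (1:ℝ) = s ^ c := by
      rw [hmul s hs, hc]; ring_nf
    have h3 : s ^ (3:ℕ) = s ^ (3:ℝ) := by
      rw [← hnat s hs 3]; norm_num
    have h1 : s = s ^ (1:ℝ) := (Real.rpow_one s).symm
    calc s ^ ((n:ℝ) - 1) * z s = s ^ ((n:ℝ) - 1) * (a * s^3 + b * s) := by rw [hz']
      _ = a * (s ^ ((n:ℝ) - 1) * s ^ (3:ℝ)) + b * (s ^ ((n:ℝ) - 1) * s ^ (1:ℝ)) := by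
          rw [← h3, ← h1]; ring
      _ = a * s ^ (c+2) + b * s ^ c := by rw [e1, e2]
  have hD0 : ∀ s : ℝ, 0 < s →
      deriv (fun s'' => s'' ^ ((n:ℝ) - 1) * z s'') s
        = a * ((c+2) * s ^ (c+1)) + b * (c * s ^ (c-1)) := by
    intro s hs
    have hEq : (fun s'' => s'' ^ ((n:ℝ) - 1) * z s'')
        =ᶠ[nhds s] (fun x => a * x ^ (c+2) + b * x ^ c) :=
      (hpos s hs).mono fun x hx => hE0 x hx
    rw [hEq.deriv_eq]
    have h1 : HasDerivAt (fun x : ℝ => a * x ^ (c+2) + b * x ^ c)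
        (a * ((c+2) * s ^ (c+2-1)) + b * (c * s ^ (c-1))) s :=
      ((Real.hasDerivAt_rpow_const (p := c+2) (Or.inl hs.ne')).const_mul a).add
        ((Real.hasDerivAt_rpow_const (p := c) (Or.inl hs.ne')).const_mul b)
    rw [h1.deriv, show c+2-(1:ℝ) = c+1 by ring]
  -- step 1
  have hE1 : ∀ s : ℝ, 0 < s →
      s ^ ((1:ℝ) - n) * deriv (fun s'' => s'' ^ ((n:ℝ) - 1) * z s'') s
        = a * (c+2) * s ^ (2:ℕ) + b * c := by
    intro s hs
    rw [hD0 s hs]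
    have e1 : s ^ ((1:ℝ) - n) * s ^ (c+1) = s ^ (2:ℝ) := by
      rw [hmul s hs, hc]; ring_nf
    have e2 : s ^ ((1:ℝ) - n) * s ^ (c-1) = 1 := by
      rw [hmul s hs, show (1:ℝ) - n + (c-1) = 0 by rw [hc]; ring, Real.rpow_zero]
    have h2 : s ^ (2:ℝ) = s ^ (2:ℕ) := by rw [← hnat s hs 2]; norm_num
    calc s ^ ((1:ℝ) - n) * (a * ((c+2) * s ^ (c+1)) + b * (c * s ^ (c-1)))
        = a * (c+2) * (s ^ ((1:ℝ) - n) * s ^ (c+1)) + b * c * (s ^ ((1:ℝ) - n) * s ^ (c-1)) := by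
          ring
      _ = a * (c+2) * s ^ (2:ℕ) + b * c := by rw [e1, e2, h2]; ring
  have hD1 : ∀ s : ℝ, 0 < s →
      deriv (fun s' => s' ^ ((1:ℝ) - n) *
          deriv (fun s'' => s'' ^ ((n:ℝ) - 1) * z s'') s') s
        = a * (c+2) * (2*s) := by
    intro s hs
    have hEq : (fun s' => s' ^ ((1:ℝ) - n) *
          deriv (fun s'' => s'' ^ ((n:ℝ) - 1) * z s'') s')
        =ᶠ[nhds s] (fun x => a * (c+2) * x ^ (2:ℕ) + b * c) :=
      (hpos s hs).mono fun x hx => hE1 x hx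
    rw [hEq.deriv_eq]
    have h1 : HasDerivAt (fun x : ℝ => a * (c+2) * x ^ (2:ℕ) + b * c)
        (a * (c+2) * ((2:ℕ) * s ^ (2-1))) s :=
      ((hasDerivAt_pow 2 s).const_mul (a * (c+2))).add_const (b*c)
    rw [h1.deriv]; push_cast; ring
  -- step 2
  have hE2 : ∀ s : ℝ, 0 < s →
      s ^ ((n:ℝ) - 1) * deriv (fun s' => s' ^ ((1:ℝ) - n) *
          deriv (fun s'' => s'' ^ ((n:ℝ) - 1) * z s'') s') s
        = 2 * a * (c+2) * s ^ c := by
    intro s hs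
    rw [hD1 s hs]
    have e1 : s ^ ((n:ℝ) - 1) * s ^ (1:ℝ) = s ^ c := by rw [hmul s hs, hc]; ring_nf
    calc s ^ ((n:ℝ) - 1) * (a * (c+2) * (2*s))
        = 2 * a * (c+2) * (s ^ ((n:ℝ) - 1) * s ^ (1:ℝ)) := by rw [Real.rpow_one]; ring
      _ = 2 * a * (c+2) * s ^ c := by rw [e1]
  have hD2 : ∀ s : ℝ, 0 < s →
      deriv (fun s => s ^ ((n:ℝ) - 1) *
          deriv (fun s' => s' ^ ((1:ℝ) - n) *
            deriv (fun s'' => s'' ^ ((n:ℝ) - 1) * z s'') s') s) s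
        = 2 * a * (c+2) * (c * s ^ (c-1)) := by
    intro s hs
    have hEq : (fun s => s ^ ((n:ℝ) - 1) *
          deriv (fun s' => s' ^ ((1:ℝ) - n) *
            deriv (fun s'' => s'' ^ ((n:ℝ) - 1) * z s'') s') s)
        =ᶠ[nhds s] (fun x => 2 * a * (c+2) * x ^ c) :=
      (hpos s hs).mono fun x hx => hE2 x hx
    rw [hEq.deriv_eq]
    have h1 : HasDerivAt (fun x : ℝ => 2 * a * (c+2) * x ^ c)
        (2 * a * (c+2) * (c * s ^ (c-1))) s :=
      (Real.hasDerivAt_rpow_const (p := c) (Or.inl hs.ne')).const_mul (2 * a * (c+2))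
    rw [h1.deriv]
  refine ⟨?_, ?_, ?_, ?_⟩
  · intro r hr
    rw [hD2 r hr.1]
    have e1 : r ^ ((1:ℝ) - n) * r ^ (c-1) = 1 := by
      rw [hmul r hr.1, show (1:ℝ) - n + (c-1) = 0 by rw [hc]; ring, Real.rpow_zero]
    calc -(r ^ ((1:ℝ) - n)) * (2 * a * (c+2) * (c * r ^ (c-1)))
        = -(2 * a * (c+2) * c) * (r ^ ((1:ℝ) - n) * r ^ (c-1)) := by ring
      _ = -(2 * a * (c+2) * c) := by rw [e1, mul_one]
      _ = -(c * (c + 2)) / R^3 := by rw [ha]; field_simp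
  · rw [hz, div_self hRne]; norm_num
  · have hzfun : z = fun s => (1/2) * (s/R)^3 - (3/2) * (s/R) := funext hz
    have hd : HasDerivAt (fun s : ℝ => (1/2) * (s/R)^3 - (3/2) * (s/R))
        ((1/2) * ((3:ℕ) * (R/R)^(3-1) * (1/R)) - (3/2) * (1/R)) R := by
      have h0 : HasDerivAt (fun s : ℝ => s / R) (1/R) R := by
        simpa using (hasDerivAt_id R).div_const R
      exact ((h0.pow 3).const_mul (1/2)).sub (h0.const_mul (3/2))
    have hdz : deriv z R = 0 := by
      rw [hzfun, hd.deriv, div_self hRne]; push_cast; ring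
    rw [hdz, hz, div_self hRne]; ring
  · intro r hr
    rw [hz, abs_le]
    have ht0 : 0 < r / R := div_pos hr.1 hR
    have ht1 : r / R ≤ 1 := (div_le_one hR).mpr hr.2
    constructor <;>
      nlinarith [mul_nonneg (sq_nonneg (r/R - 1)) (by linarith : (0:ℝ) ≤ r/R + 2)]
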